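/- Let k ≥ 2 and let Ψ be a Max-kSAT instance with m_j j-clauses for j = 1,…,k, and set D = Σ_{j=2}^k ((2^j − j − 1)/2^{j−2})·m_j. If D > 0 and bias(Ψ) ≤ D, then val_Ψ ≥ Σ_{j=1}^k (1 − 2^{−j})·m_j + bias(Ψ)²/(4D). (Lemma 6.2, part 2.) -/

import Mathlib

/-- A `Max-kSAT` clause: a disjunction of between 1 and `k` literals on pairwise
distinct variables. A literal on variable `i` with polarity `b` (`b = true` for `xᵢ`,
`b = false` for `¬xᵢ`) evaluates to `σ i == b`. -/
structure KClause (n k : ℕ) where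
  lits : List (Fin n × Bool)
  nodup : (lits.map Prod.fst).Nodup
  len_pos : 0 < lits.length
  len_le : lits.length ≤ k

/-- A clause is satisfied iff at least one of its literals receives value 1. -/
def KClause.eval {n k : ℕ} (C : KClause n k) (σ : Fin n → Bool) : Bool :=
  C.lits.any (fun l => σ l.1 == l.2)

/-- The number of clauses of `Ψ` satisfied by `σ`, i.e. `val_Ψ(σ)`. -/
def satCount {n k : ℕ} (Ψ : List (KClause n k)) (σ : Fin n → Bool) : ℕ :=
  Ψ.countP (fun C => C.eval σ)

/-- `val_Ψ`: the maximum number of simultaneously satisfiable clauses. -/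
def maxVal {n k : ℕ} (Ψ : List (KClause n k)) : ℕ :=
  Finset.univ.sup (fun σ : Fin n → Bool => satCount Ψ σ)

/-- `m_r`: the number of `r`-clauses (clauses on exactly `r` variables). -/
def numLen {n k : ℕ} (Ψ : List (KClause n k)) (r : ℕ) : ℕ :=
  Ψ.countP (fun C => C.lits.length == r)

/-- The number of `r`-clauses containing the literal on variable `v` with
polarity `b` (so `pos_v^{(r)}` for `b = true` and `neg_v^{(r)}` for `b = false`). -/
def cntLit {n k : ℕ} (Ψ : List (KClause n k)) (v : Fin n) (b : Bool) (r : ℕ) : ℕ :=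
  Ψ.countP (fun C => decide (C.lits.length = r ∧ (v, b) ∈ C.lits))

/-- `bias(Ψ) = Σᵢ |Σ_{r=1}^k 2^{−(r−1)}·(posᵢ^{(r)} − negᵢ^{(r)})|`. -/
noncomputable def bias {n k : ℕ} (Ψ : List (KClause n k)) : ℝ :=
  ∑ v : Fin n,
    |∑ r ∈ Finset.Icc 1 k,
      ((cntLit Ψ v true r : ℝ) - (cntLit Ψ v false r : ℝ)) / 2 ^ (r - 1)|

namespace KsatAux
open Finset

variable {n k : ℕ}

lemma sum_prod_swap (g : Fin n → Bool → ℝ) :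
    ∑ σ : Fin n → Bool, ∏ i, g i (σ i) = ∏ i, (g i true + g i false) := by
  rw [← Fintype.prod_sum (fun (_ : Fin n) (b : Bool) => g _ b)]
  simp [Fintype.sum_bool]

/-- probability that `σ i = b` under the biased distribution -/
noncomputable def wfac (ε : ℝ) (s : Fin n → Bool) (i : Fin n) (b : Bool) : ℝ :=
  if b = s i then 1/2 + ε else 1/2 - ε

noncomputable def w (ε : ℝ) (s : Fin n → Bool) (σ : Fin n → Bool) : ℝ :=
  ∏ i, wfac ε s i (σ i)

lemma wfac_nonneg {ε : ℝ} (h0 : 0 ≤ ε) (h1 : ε ≤ 1/2) (s : Fin n → Bool)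
    (i : Fin n) (b : Bool) : 0 ≤ wfac ε s i b := by
  unfold wfac; split <;> linarith

lemma w_nonneg {ε : ℝ} (h0 : 0 ≤ ε) (h1 : ε ≤ 1/2) (s σ : Fin n → Bool) :
    0 ≤ w ε s σ :=
  Finset.prod_nonneg fun i _ => wfac_nonneg h0 h1 s i (σ i)

lemma sum_w (ε : ℝ) (s : Fin n → Bool) : ∑ σ : Fin n → Bool, w ε s σ = 1 := by
  unfold w
  rw [sum_prod_swap]
  rw [Finset.prod_eq_one]
  intro i _
  unfold wfac
  cases h : s i <;> simp [h] <;> ring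


/-- probability that literal `l` is falsified -/
noncomputable def q (ε : ℝ) (s : Fin n → Bool) (l : Fin n × Bool) : ℝ :=
  wfac ε s l.1 (!l.2)

lemma pair_mem_iff {lits : List (Fin n × Bool)} (hnd : (lits.map Prod.fst).Nodup)
    {l : Fin n × Bool} (hl : l ∈ lits) (b : Bool) :
    ((l.1, b) ∈ lits) ↔ b = l.2 := by
  constructor
  · intro hmem
    have := List.inj_on_of_nodup_map hnd hmem hl rfl
    exact (congrArg Prod.snd this)
  · rintro rfl; exact hl

set_option maxHeartbeats 1000000 in
lemma prob_unsat (ε : ℝ) (s : Fin n → Bool) (C : KClause n k) :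
    ∑ σ : Fin n → Bool, w ε s σ * (if C.eval σ then 0 else 1) =
      (C.lits.map (q ε s)).prod := by
  classical
  let h : Fin n → Bool → ℝ := fun i b => if (i, b) ∈ C.lits then 0 else 1
  have hmem0 : ∀ i b, (i, b) ∈ C.lits → h i b = 0 := by
    intro i b m; simp only [h]; rw [if_pos m]
  have hmem1 : ∀ i b, (i, b) ∉ C.lits → h i b = 1 := by
    intro i b m; simp only [h]; rw [if_neg m]
  have hind : ∀ σ : Fin n → Bool,
      (if C.eval σ then (0:ℝ) else 1) = ∏ i, h i (σ i) := by
    intro σ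
    by_cases he : C.eval σ
    · simp only [he, if_true]
      rw [eq_comm]
      obtain ⟨l, hl, hsat⟩ := List.any_eq_true.mp he
      have hσ : σ l.1 = l.2 := by simpa using hsat
      refine Finset.prod_eq_zero (Finset.mem_univ l.1) (hmem0 _ _ ?_)
      rw [hσ]; exact hl
    · simp only [he, if_false]
      rw [eq_comm]
      refine Finset.prod_eq_one fun i _ => hmem1 _ _ ?_
      intro hmem
      exact he (List.any_eq_true.mpr ⟨(i, σ i), hmem, by simp⟩)
  have hstep : ∀ σ : Fin n → Bool,
      w ε s σ * (if C.eval σ then (0:ℝ) else 1)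
        = ∏ i, (wfac ε s i (σ i) * h i (σ i)) := by
    intro σ
    rw [hind σ]
    unfold w
    rw [Finset.prod_mul_distrib]
  calc ∑ σ : Fin n → Bool, w ε s σ * (if C.eval σ then (0:ℝ) else 1)
      = ∑ σ : Fin n → Bool, ∏ i, (wfac ε s i (σ i) * h i (σ i)) := by
        exact Finset.sum_congr rfl fun σ _ => hstep σ
    _ = ∏ i, (wfac ε s i true * h i true + wfac ε s i false * h i false) :=
        sum_prod_swap (fun i b => wfac ε s i b * h i b)
    _ = (C.lits.map (q ε s)).prod := by
        set G : Fin n → ℝ :=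
          fun i => wfac ε s i true * h i true + wfac ε s i false * h i false with hG
        have hG1 : ∀ i : Fin n, i ∉ (C.lits.map Prod.fst) → G i = 1 := by
          intro i hi
          have ht : (i, true) ∉ C.lits :=
            fun hmem => hi (List.mem_map.mpr ⟨(i,true), hmem, rfl⟩)
          have hf : (i, false) ∉ C.lits :=
            fun hmem => hi (List.mem_map.mpr ⟨(i,false), hmem, rfl⟩)
          show wfac ε s i true * h i true + wfac ε s i false * h i false = 1
          rw [hmem1 _ _ ht, hmem1 _ _ hf, mul_one, mul_one]
          unfold wfac
          cases hs : s i <;> simp <;> ring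
        have hG2 : ∀ l ∈ C.lits, G l.1 = q ε s l := by
          rintro ⟨v, c⟩ hl
          have hmt := pair_mem_iff C.nodup hl true
          have hmf := pair_mem_iff C.nodup hl false
          show wfac ε s v true * h v true + wfac ε s v false * h v false
            = q ε s (v, c)
          cases c
          · have h1 : (v, true) ∉ C.lits := fun hx => by simpa using hmt.mp hx
            rw [hmem1 _ _ h1, hmem0 _ _ hl, mul_one, mul_zero, add_zero]
            rfl
          · have h2 : (v, false) ∉ C.lits := fun hx => by simpa using hmf.mp hx
            rw [hmem0 _ _ hl, hmem1 _ _ h2, mul_zero, mul_one, zero_add]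
            rfl
        calc ∏ i, G i = ∏ i ∈ (C.lits.map Prod.fst).toFinset, G i := by
              rw [eq_comm]
              refine Finset.prod_subset (Finset.subset_univ _) ?_
              intro i _ hi
              exact hG1 i (by simpa using hi)
          _ = ((C.lits.map Prod.fst).map G).prod := List.prod_toFinset G C.nodup
          _ = (C.lits.map (fun l => G l.1)).prod := by rw [List.map_map]; rfl
          _ = (C.lits.map (q ε s)).prod := by
              congr 1; exact List.map_congr_left hG2

lemma prob_sat (ε : ℝ) (s : Fin n → Bool) (C : KClause n k) :
    ∑ σ : Fin n → Bool, w ε s σ * (if C.eval σ then 1 else 0) =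
      1 - (C.lits.map (q ε s)).prod := by
  have h : ∀ σ : Fin n → Bool,
      w ε s σ * (if C.eval σ then (1:ℝ) else 0)
        = w ε s σ - w ε s σ * (if C.eval σ then (0:ℝ) else 1) := by
    intro σ; by_cases he : C.eval σ <;> simp [he]
  rw [Finset.sum_congr rfl fun σ _ => h σ, Finset.sum_sub_distrib, sum_w,
    prob_unsat]


lemma countP_cast (p : KClause n k → Bool) (Ψ : List (KClause n k)) :
    ((Ψ.countP p : ℕ) : ℝ) = (Ψ.map (fun C => if p C then (1:ℝ) else 0)).sum := by
  induction Ψ with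
  | nil => simp
  | cons C Ψ ih =>
      rw [List.countP_cons, List.map_cons, List.sum_cons]
      by_cases h : p C <;> simp [h, ih] <;> ring

lemma exp_eq (ε : ℝ) (s : Fin n → Bool) (Ψ : List (KClause n k)) :
    ∑ σ : Fin n → Bool, w ε s σ * (satCount Ψ σ : ℝ) =
      (Ψ.map (fun C => 1 - (C.lits.map (q ε s)).prod)).sum := by
  induction Ψ with
  | nil => simp [satCount]
  | cons C Ψ ih =>
      have hsc : ∀ σ : Fin n → Bool, ((satCount (C :: Ψ) σ : ℕ) : ℝ)
          = (if C.eval σ then (1:ℝ) else 0) + (satCount Ψ σ : ℝ) := by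
        intro σ
        unfold satCount
        rw [List.countP_cons]
        by_cases h : C.eval σ <;> simp [h] <;> push_cast <;> ring
      calc ∑ σ : Fin n → Bool, w ε s σ * (satCount (C :: Ψ) σ : ℝ)
          = ∑ σ : Fin n → Bool, (w ε s σ * (if C.eval σ then (1:ℝ) else 0)
              + w ε s σ * (satCount Ψ σ : ℝ)) := by
            refine Finset.sum_congr rfl fun σ _ => ?_
            rw [hsc σ]; ring
        _ = (1 - (C.lits.map (q ε s)).prod)
              + (Ψ.map (fun C => 1 - (C.lits.map (q ε s)).prod)).sum := by
            rw [Finset.sum_add_distrib, prob_sat, ih]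
        _ = ((C :: Ψ).map (fun C => 1 - (C.lits.map (q ε s)).prod)).sum := by
            rw [List.map_cons, List.sum_cons]

lemma avg_le_max {ε : ℝ} (h0 : 0 ≤ ε) (h1 : ε ≤ 1/2) (s : Fin n → Bool)
    (Ψ : List (KClause n k)) :
    ∑ σ : Fin n → Bool, w ε s σ * (satCount Ψ σ : ℝ) ≤ (maxVal Ψ : ℝ) := by
  calc ∑ σ : Fin n → Bool, w ε s σ * (satCount Ψ σ : ℝ)
      ≤ ∑ σ : Fin n → Bool, w ε s σ * (maxVal Ψ : ℝ) := by
        refine Finset.sum_le_sum fun σ _ => ?_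
        refine mul_le_mul_of_nonneg_left ?_ (w_nonneg h0 h1 s σ)
        have hle : satCount Ψ σ ≤ maxVal Ψ :=
          Finset.le_sup (f := fun σ => satCount Ψ σ) (Finset.mem_univ σ)
        exact Nat.cast_le.mpr hle
    _ = (maxVal Ψ : ℝ) := by rw [← Finset.sum_mul, sum_w, one_mul]

/-- The key product inequality. -/
lemma prod_bound {ε : ℝ} (hε0 : 0 ≤ ε) (hε : ε ≤ 1/2) :
    ∀ L : List ℝ, (∀ x ∈ L, |x| ≤ ε) →
      |L.sum| ≤ L.length * ε ∧ 0 ≤ (L.map (fun x => 1 - 2*x)).prod ∧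
      (L.map (fun x => 1 - 2*x)).prod
        ≤ 1 - 2*L.sum + 4*ε^2*(2^L.length - L.length - 1) := by
  intro L
  induction L with
  | nil => intro _; norm_num
  | cons x L ih =>
      intro hmem
      obtain ⟨hS, hP0, hP⟩ := ih (fun y hy => hmem y (List.mem_cons_of_mem x hy))
      have hx : |x| ≤ ε := hmem x (List.mem_cons_self (a := x) (l := L))
      have hx1 : -ε ≤ x := neg_le_of_abs_le hx
      have hx2 : x ≤ ε := le_of_abs_le hx
      have hS1 : -(L.length * ε) ≤ L.sum := neg_le_of_abs_le hS
      have hS2 : L.sum ≤ L.length * ε := le_of_abs_le hS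
      have hfac : (0:ℝ) ≤ 1 - 2*x := by linarith
      have hE : (0:ℝ) ≤ 2^L.length - L.length - 1 := by
        have h2 : (L.length : ℝ) + 1 ≤ 2^L.length := by
          exact_mod_cast Nat.succ_le_of_lt (Nat.lt_two_pow_self (n := L.length))
        linarith
      refine ⟨?_, ?_, ?_⟩
      · rw [List.sum_cons, List.length_cons]
        push_cast
        calc |x + L.sum| ≤ |x| + |L.sum| := abs_add_le _ _
          _ ≤ ε + L.length * ε := add_le_add hx hS
          _ = (L.length + 1) * ε := by ring
      · rw [List.map_cons, List.prod_cons]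
        exact mul_nonneg hfac hP0
      · rw [List.map_cons, List.prod_cons, List.sum_cons, List.length_cons]
        push_cast
        calc (1 - 2*x) * (L.map (fun x => 1 - 2*x)).prod
            ≤ (1 - 2*x) * (1 - 2*L.sum + 4*ε^2*(2^L.length - L.length - 1)) :=
              mul_le_mul_of_nonneg_left hP hfac
          _ ≤ 1 - 2*(x + L.sum) + 4*ε^2*(2^(L.length+1) - ((L.length:ℝ)+1) - 1) := by
              have c0 : (0:ℝ) ≤ ε^2*(2^L.length - L.length - 1) :=
                mul_nonneg (sq_nonneg ε) hE
              have h1 : x * L.sum ≤ ε * (L.length * ε) := by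
                calc x * L.sum ≤ |x * L.sum| := le_abs_self _
                  _ = |x| * |L.sum| := abs_mul _ _
                  _ ≤ ε * (L.length * ε) :=
                    mul_le_mul hx hS (abs_nonneg _) (le_trans (abs_nonneg x) hx)
              have h2 : -(x * (ε^2*(2^L.length - L.length - 1)))
                  ≤ ε * (ε^2*(2^L.length - L.length - 1)) := by
                rw [neg_mul_eq_neg_mul]
                exact mul_le_mul_of_nonneg_right (by linarith) c0
              have h3 : ε * (ε^2*(2^L.length - L.length - 1))
                  ≤ (1/2) * (ε^2*(2^L.length - L.length - 1)) :=
                mul_le_mul_of_nonneg_right hε c0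
              have hpow : (2:ℝ)^(L.length+1) = 2 * 2^L.length := by ring
              nlinarith [h1, h2, h3]


lemma sum_by_len (Ψ : List (KClause n k)) (f : ℕ → ℝ) :
    (Ψ.map (fun C => f C.lits.length)).sum
      = ∑ j ∈ Finset.Icc 1 k, (numLen Ψ j : ℝ) * f j := by
  induction Ψ with
  | nil => simp [numLen]
  | cons C Ψ ih =>
      have hnum : ∀ j, ((numLen (C :: Ψ) j : ℕ) : ℝ)
          = (numLen Ψ j : ℝ) + (if C.lits.length = j then 1 else 0) := by
        intro j
        unfold numLen
        rw [List.countP_cons]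
        by_cases h : C.lits.length = j <;> simp [h]
      have hmem : C.lits.length ∈ Finset.Icc 1 k :=
        Finset.mem_Icc.mpr ⟨C.len_pos, C.len_le⟩
      have hsingle : ∑ j ∈ Finset.Icc 1 k,
          (if C.lits.length = j then (1:ℝ) else 0) * f j = f C.lits.length := by
        rw [Finset.sum_congr rfl
          (fun j _ => by rw [ite_mul, one_mul, zero_mul]),
          Finset.sum_ite_eq (Finset.Icc 1 k) C.lits.length f, if_pos hmem]
      have hsplit : ∑ j ∈ Finset.Icc 1 k, (numLen (C :: Ψ) j : ℝ) * f j
          = ∑ j ∈ Finset.Icc 1 k, ((numLen Ψ j : ℝ) * f j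
              + (if C.lits.length = j then (1:ℝ) else 0) * f j) := by
        refine Finset.sum_congr rfl fun j _ => ?_
        rw [hnum j]; ring
      rw [List.map_cons, List.sum_cons, ih, hsplit, Finset.sum_add_distrib,
        hsingle]
      ring

/-- sign of a boolean -/
def sgn (b : Bool) : ℝ := if b then 1 else -1

def eta (s : Fin n → Bool) (l : Fin n × Bool) : ℝ := sgn (s l.1) * sgn l.2

lemma abs_sgn (b : Bool) : |sgn b| = 1 := by cases b <;> simp [sgn]

lemma lit_sum_eq (s : Fin n → Bool) (C : KClause n k) :
    (C.lits.map (eta s)).sum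
      = ∑ v : Fin n, sgn (s v) *
          ((if (v, true) ∈ C.lits then (1:ℝ) else 0)
            - (if (v, false) ∈ C.lits then (1:ℝ) else 0)) := by
  classical
  have hnd : C.lits.Nodup := C.nodup.of_map _
  calc (C.lits.map (eta s)).sum
      = C.lits.toFinset.sum (eta s) := (List.sum_toFinset _ hnd).symm
    _ = ∑ p : Fin n × Bool, (if p ∈ C.lits.toFinset then eta s p else 0) := by
        rw [Finset.sum_ite_mem, Finset.univ_inter]
    _ = ∑ v : Fin n, ∑ b : Bool,
          (if (v, b) ∈ C.lits.toFinset then eta s (v, b) else 0) :=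
        Fintype.sum_prod_type _
    _ = ∑ v : Fin n, sgn (s v) *
          ((if (v, true) ∈ C.lits then (1:ℝ) else 0)
            - (if (v, false) ∈ C.lits then (1:ℝ) else 0)) := by
        refine Finset.sum_congr rfl fun v _ => ?_
        rw [Fintype.sum_bool]
        simp only [List.mem_toFinset, eta, sgn]
        by_cases h1 : (v, true) ∈ C.lits <;>
          by_cases h2 : (v, false) ∈ C.lits <;>
          simp [h1, h2] <;> ring

lemma sum_bias_eq (s : Fin n → Bool) (Ψ : List (KClause n k)) :
    (Ψ.map (fun C => (2 / 2^C.lits.length) * ((C.lits.map (eta s)).sum))).sum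
      = ∑ v : Fin n, sgn (s v) *
          ∑ r ∈ Finset.Icc 1 k,
            ((cntLit Ψ v true r : ℝ) - (cntLit Ψ v false r : ℝ)) / 2^(r-1) := by
  classical
  induction Ψ with
  | nil => simp [cntLit]
  | cons C Ψ ih =>
      have hcnt : ∀ (v : Fin n) (b : Bool) (r : ℕ),
          ((cntLit (C :: Ψ) v b r : ℕ) : ℝ)
            = (cntLit Ψ v b r : ℝ)
              + (if C.lits.length = r ∧ (v, b) ∈ C.lits then 1 else 0) := by
        intro v b r
        unfold cntLit
        rw [List.countP_cons]
        by_cases h : C.lits.length = r ∧ (v, b) ∈ C.lits <;> simp [h]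
      have hmem : C.lits.length ∈ Finset.Icc 1 k :=
        Finset.mem_Icc.mpr ⟨C.len_pos, C.len_le⟩
      have hpow : (2:ℝ) / 2^C.lits.length = 1 / 2^(C.lits.length - 1) := by
        have : C.lits.length = (C.lits.length - 1) + 1 :=
          (Nat.succ_pred_eq_of_pos C.len_pos).symm
        rw [this, pow_succ]
        have h0 : (0:ℝ) < 2^(C.lits.length - 1) := by positivity
        field_simp
        ring_nf
        simp
      have key : (2 / 2^C.lits.length) * ((C.lits.map (eta s)).sum)
          = ∑ v : Fin n, sgn (s v) *
              ∑ r ∈ Finset.Icc 1 k,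
                ((if C.lits.length = r ∧ (v, true) ∈ C.lits then (1:ℝ) else 0)
                  - (if C.lits.length = r ∧ (v, false) ∈ C.lits then (1:ℝ) else 0))
                  / 2^(r-1) := by
        rw [lit_sum_eq, Finset.mul_sum]
        refine Finset.sum_congr rfl fun v _ => ?_
        have hinner : ∑ r ∈ Finset.Icc 1 k,
            ((if C.lits.length = r ∧ (v, true) ∈ C.lits then (1:ℝ) else 0)
              - (if C.lits.length = r ∧ (v, false) ∈ C.lits then (1:ℝ) else 0))
              / 2^(r-1)
            = ((if (v, true) ∈ C.lits then (1:ℝ) else 0)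
                - (if (v, false) ∈ C.lits then (1:ℝ) else 0))
                / 2^(C.lits.length - 1) := by
          have hform : ∀ r ∈ Finset.Icc 1 k,
              ((if C.lits.length = r ∧ (v, true) ∈ C.lits then (1:ℝ) else 0)
                - (if C.lits.length = r ∧ (v, false) ∈ C.lits then (1:ℝ) else 0))
                / 2^(r-1)
              = (if C.lits.length = r then
                  ((if (v, true) ∈ C.lits then (1:ℝ) else 0)
                    - (if (v, false) ∈ C.lits then (1:ℝ) else 0)) / 2^(r-1)
                 else 0) := by
            intro r _
            by_cases hr : C.lits.length = r
            · subst hr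
              by_cases h1 : (v, true) ∈ C.lits <;>
                by_cases h2 : (v, false) ∈ C.lits <;> simp [h1, h2]
            · simp [hr]
          rw [Finset.sum_congr rfl hform,
            Finset.sum_ite_eq (Finset.Icc 1 k) C.lits.length
              (fun r => ((if (v, true) ∈ C.lits then (1:ℝ) else 0)
                - (if (v, false) ∈ C.lits then (1:ℝ) else 0)) / 2^(r-1)),
            if_pos hmem]
        rw [hinner, hpow]
        ring
      rw [List.map_cons, List.sum_cons, ih, key]
      rw [← Finset.sum_add_distrib]
      refine Finset.sum_congr rfl fun v _ => ?_
      rw [← mul_add, ← Finset.sum_add_distrib]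
      congr 1
      refine Finset.sum_congr rfl fun r _ => ?_
      rw [hcnt v true r, hcnt v false r]
      ring


lemma clause_bound {ε : ℝ} (hε0 : 0 ≤ ε) (hε : ε ≤ 1/2) (s : Fin n → Bool)
    (C : KClause n k) :
    (1 - 1/2^C.lits.length
        - ε^2 * (4*(2^C.lits.length - (C.lits.length:ℝ) - 1)/2^C.lits.length))
      + ε * ((2 / 2^C.lits.length) * ((C.lits.map (eta s)).sum))
    ≤ 1 - (C.lits.map (q ε s)).prod := by
  classical
  set j := C.lits.length with hj
  set L : List ℝ := C.lits.map (fun l => ε * eta s l) with hL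
  have hLlen : L.length = j := by rw [hL, List.length_map]
  have hLsum : L.sum = ε * (C.lits.map (eta s)).sum := by
    rw [hL, List.sum_map_mul_left]
  have hqval : ∀ l ∈ C.lits, q ε s l = 1/2 - ε * eta s l := by
    intro l _
    unfold q wfac eta sgn
    cases hb : l.2 <;> cases hs : s l.1 <;> simp [hb, hs] <;> ring
  have hqprod : (C.lits.map (q ε s)).prod
      = (L.map (fun x => 1 - 2*x)).prod * (1/2:ℝ)^j := by
    have h1 : C.lits.map (q ε s)
        = C.lits.map (fun l => (1 - 2*(ε * eta s l)) * (1/2)) :=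
      List.map_congr_left (fun l hl => by rw [hqval l hl]; ring)
    have h2 : (C.lits.map (fun l => (1 - 2*(ε * eta s l)) * (1/2:ℝ))).prod
        = (C.lits.map (fun l => 1 - 2*(ε * eta s l))).prod
          * (C.lits.map (fun _ => (1/2:ℝ))).prod := List.prod_map_mul
    have h3 : (C.lits.map (fun _ => (1/2:ℝ))).prod = (1/2:ℝ)^j := by
      rw [List.map_const', List.prod_replicate, hj]
    have h4 : L.map (fun x => 1 - 2*x)
        = C.lits.map (fun l => 1 - 2*(ε * eta s l)) := by
      rw [hL, List.map_map]; rfl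
    rw [h1, h2, h3, h4]
  have hmemL : ∀ x ∈ L, |x| ≤ ε := by
    intro x hx
    rw [hL] at hx
    obtain ⟨l, _, rfl⟩ := List.mem_map.mp hx
    rw [abs_mul, abs_of_nonneg hε0]
    unfold eta
    rw [abs_mul, abs_sgn, abs_sgn]
    simp
  obtain ⟨_, _, hP⟩ := prod_bound hε0 hε L hmemL
  rw [hLlen, hLsum] at hP
  have h2j : (0:ℝ) < 2^j := by positivity
  have e1 : (L.map (fun x => 1 - 2*x)).prod * (1/2:ℝ)^j
      = (L.map (fun x => 1 - 2*x)).prod / 2^j := by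
    rw [one_div, inv_pow]; ring
  have e2 : 1 - 1/(2:ℝ)^j - ε^2 * (4*(2^j - (j:ℝ) - 1)/2^j)
        + ε * ((2 / 2^j) * ((C.lits.map (eta s)).sum))
      = 1 - (1 - 2*(ε * (C.lits.map (eta s)).sum)
          + 4*ε^2*(2^j - (j:ℝ) - 1)) / 2^j := by
    field_simp
    ring
  rw [hqprod, e1, e2]
  have h3 : (L.map (fun x => 1 - 2*x)).prod / 2^j
      ≤ (1 - 2*(ε * (C.lits.map (eta s)).sum) + 4*ε^2*(2^j - (j:ℝ) - 1)) / 2^j :=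
    (div_le_div_iff_of_pos_right h2j).mpr hP
  linarith [h3]

end KsatAux

open KsatAux in
/-- Lemma 6.2, part 2: with `D = Σ_{j=2}^k ((2^j − j − 1)/2^{j−2})·m_j`, if `D > 0`
and `bias(Ψ) ≤ D` then `val_Ψ ≥ Σ_{j=1}^k (1 − 2^{−j})·m_j + bias(Ψ)²/(4D)`. -/
theorem ksat_bias_lower_bound_two {n k : ℕ} (hk : 2 ≤ k) (Ψ : List (KClause n k))
    (D : ℝ)
    (hD : D = ∑ j ∈ Finset.Icc 2 k,
      (((2 : ℝ) ^ j - (j : ℝ) - 1) / 2 ^ (j - 2)) * (numLen Ψ j : ℝ))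
    (hDpos : 0 < D) (hb : bias Ψ ≤ D) :
    ∑ j ∈ Finset.Icc 1 k, (1 - 1 / (2 : ℝ) ^ j) * (numLen Ψ j : ℝ)
        + (bias Ψ) ^ 2 / (4 * D) ≤ (maxVal Ψ : ℝ) := by

  classical
  have hb0 : 0 ≤ bias Ψ := Finset.sum_nonneg fun v _ => abs_nonneg _
  set ε : ℝ := bias Ψ / (2*D) with hεdef
  have hε0 : 0 ≤ ε := div_nonneg hb0 (by linarith)
  have hεhalf : ε ≤ 1/2 := by
    rw [hεdef, div_le_iff₀ (by linarith)]
    linarith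
  set s : Fin n → Bool := fun v => decide (0 ≤ ∑ r ∈ Finset.Icc 1 k,
      ((cntLit Ψ v true r : ℝ) - (cntLit Ψ v false r : ℝ)) / 2^(r-1)) with hsdef
  -- the signed sums add up to the bias
  have hbias : ∑ v : Fin n, sgn (s v) * ∑ r ∈ Finset.Icc 1 k,
      ((cntLit Ψ v true r : ℝ) - (cntLit Ψ v false r : ℝ)) / 2^(r-1) = bias Ψ := by
    unfold bias
    refine Finset.sum_congr rfl fun v _ => ?_
    by_cases h : 0 ≤ ∑ r ∈ Finset.Icc 1 k,
        ((cntLit Ψ v true r : ℝ) - (cntLit Ψ v false r : ℝ)) / 2^(r-1)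
    · rw [abs_of_nonneg h]
      have hsv : s v = true := by simp [hsdef, h]
      rw [hsv]
      simp [sgn]
    · rw [abs_of_neg (lt_of_not_ge h)]
      have hsv : s v = false := by simp [hsdef, h]
      rw [hsv]
      simp [sgn]
  -- the expectation chain
  have step1 := avg_le_max hε0 hεhalf s Ψ
  have step2 := exp_eq ε s Ψ
  have step3 : (Ψ.map (fun C =>
      (1 - 1/2^C.lits.length
          - ε^2 * (4*(2^C.lits.length - (C.lits.length:ℝ) - 1)/2^C.lits.length))
        + ε * ((2 / 2^C.lits.length) * ((C.lits.map (eta s)).sum)))).sum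
      ≤ (Ψ.map (fun C => 1 - (C.lits.map (q ε s)).prod)).sum :=
    List.sum_le_sum (fun C _ => clause_bound hε0 hεhalf s C)
  -- rewrite the lower bound
  have step4 : (Ψ.map (fun C =>
      (1 - 1/2^C.lits.length
          - ε^2 * (4*(2^C.lits.length - (C.lits.length:ℝ) - 1)/2^C.lits.length))
        + ε * ((2 / 2^C.lits.length) * ((C.lits.map (eta s)).sum)))).sum
      = (Ψ.map (fun C => 1 - 1/2^C.lits.length
          - ε^2 * (4*(2^C.lits.length - (C.lits.length:ℝ) - 1)/2^C.lits.length))).sum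
        + ε * (Ψ.map (fun C =>
            (2 / 2^C.lits.length) * ((C.lits.map (eta s)).sum))).sum := by
    rw [List.sum_map_add, ← List.sum_map_mul_left]
  have step5 : (Ψ.map (fun C =>
      (2 / 2^C.lits.length) * ((C.lits.map (eta s)).sum))).sum = bias Ψ := by
    rw [sum_bias_eq s Ψ, hbias]
  have step6 : (Ψ.map (fun C => 1 - 1/2^C.lits.length
          - ε^2 * (4*(2^C.lits.length - (C.lits.length:ℝ) - 1)/2^C.lits.length))).sum
      = ∑ j ∈ Finset.Icc 1 k, (numLen Ψ j : ℝ)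
          * (1 - 1/2^j - ε^2 * (4*(2^j - (j:ℝ) - 1)/2^j)) :=
    sum_by_len Ψ (fun j => 1 - 1/2^j - ε^2 * (4*(2^j - (j:ℝ) - 1)/2^j))
  have step7 : ∑ j ∈ Finset.Icc 1 k, (numLen Ψ j : ℝ)
          * (1 - 1/2^j - ε^2 * (4*(2^j - (j:ℝ) - 1)/2^j))
      = ∑ j ∈ Finset.Icc 1 k, (1 - 1 / (2:ℝ)^j) * (numLen Ψ j : ℝ)
        - ε^2 * ∑ j ∈ Finset.Icc 1 k,
            (numLen Ψ j : ℝ) * (4*(2^j - (j:ℝ) - 1)/2^j) := by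
    rw [Finset.mul_sum, ← Finset.sum_sub_distrib]
    refine Finset.sum_congr rfl fun j _ => ?_
    ring
  have hIcc : Finset.Icc 1 k = insert 1 (Finset.Icc 2 k) := by
    ext x
    simp only [Finset.mem_Icc, Finset.mem_insert]
    omega
  have hDalt : ∑ j ∈ Finset.Icc 1 k,
      (numLen Ψ j : ℝ) * (4*(2^j - (j:ℝ) - 1)/2^j) = D := by
    rw [hD, hIcc, Finset.sum_insert (by simp [Finset.mem_Icc])]
    have h1 : (numLen Ψ 1 : ℝ) * (4*(2^1 - ((1:ℕ):ℝ) - 1)/2^1) = 0 := by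
      norm_num
    rw [h1, zero_add]
    refine Finset.sum_congr rfl fun j hj => ?_
    have hj2 : 2 ≤ j := (Finset.mem_Icc.mp hj).1
    have hpow : (2:ℝ)^j = 2^(j-2) * 4 := by
      calc (2:ℝ)^j = 2^((j-2)+2) := by rw [Nat.sub_add_cancel hj2]
        _ = 2^(j-2) * 4 := by rw [pow_add]; norm_num
    have h2 : (0:ℝ) < 2^(j-2) := by positivity
    rw [hpow]
    field_simp
  have harith : ε * bias Ψ - ε^2 * D = (bias Ψ)^2 / (4*D) := by
    have hD0 : D ≠ 0 := ne_of_gt hDpos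
    rw [hεdef]
    field_simp
    ring
  rw [step5] at step4
  rw [hDalt] at step7
  linarith [step1, step3]
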